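/- Fix n ≥ 3, k ≥ 1, and T > 0. Suppose θ₁, …, θ_k ∈ (0, 2·arcsin(√(1 − sin(π/n)))) satisfy ∑ᵢ θᵢ = ((n−2)kπ − T)/n with ((n−2)π − T/k)/n in the same interval. Then ∑ᵢ 2n·arcosh(cos(π/n)/sin(θᵢ/2)) ≥ 2nk·arcosh(cos(π/n)/sin(((n−2)π − T/k)/(2n))), with equality iff all θᵢ are equal. (Minimal total perimeter of k regular hyperbolic n-gons with total area T, each of area exceeding (n−2)π − 2n·arcsin(√(1 − sin(π/n))).) -/

import Mathlib

open Real

noncomputable def artanh (x : ℝ) : ℝ := Real.log ((1 + x) / (1 - x)) / 2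

noncomputable def arccot (x : ℝ) : ℝ := Real.pi / 2 - Real.arctan x

noncomputable def arcosh (x : ℝ) : ℝ := Real.log (x + Real.sqrt (x ^ 2 - 1))

noncomputable def Pfun (c θ : ℝ) : ℝ := _root_.arcosh (c / Real.sin (θ / 2))
noncomputable def Pder (c θ : ℝ) : ℝ :=
  -(c * Real.cos (θ / 2)) /
    (2 * Real.sin (θ / 2) * Real.sqrt (c ^ 2 - Real.sin (θ / 2) ^ 2))
noncomputable def Pder2 (c θ : ℝ) : ℝ :=
  c * (c ^ 2 - 2 * Real.sin (θ / 2) ^ 2 + Real.sin (θ / 2) ^ 4) /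
    (4 * Real.sin (θ / 2) ^ 2 *
      ((c ^ 2 - Real.sin (θ / 2) ^ 2) * Real.sqrt (c ^ 2 - Real.sin (θ / 2) ^ 2)))

lemma hasDerivAt_arcosh {x : ℝ} (hx : 1 < x) :
    HasDerivAt _root_.arcosh (1 / Real.sqrt (x ^ 2 - 1)) x := by
  have hx0 : (0:ℝ) < x := lt_trans one_pos hx
  have h1 : (0:ℝ) < x ^ 2 - 1 := by nlinarith
  have hy : 0 < Real.sqrt (x ^ 2 - 1) := Real.sqrt_pos.2 h1
  have hsq : Real.sqrt (x ^ 2 - 1) ^ 2 = x ^ 2 - 1 := Real.sq_sqrt h1.le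
  have d1 : HasDerivAt (fun t : ℝ => t ^ 2 - 1) (2 * x) x := by
    simpa using ((hasDerivAt_pow 2 x).sub_const 1)
  have d2 : HasDerivAt (fun t : ℝ => Real.sqrt (t ^ 2 - 1))
      (2 * x / (2 * Real.sqrt (x ^ 2 - 1))) x := d1.sqrt h1.ne'
  have d3 : HasDerivAt (fun t : ℝ => t + Real.sqrt (t ^ 2 - 1))
      (1 + 2 * x / (2 * Real.sqrt (x ^ 2 - 1))) x := (hasDerivAt_id x).add d2
  have hpos : 0 < x + Real.sqrt (x ^ 2 - 1) := by positivity
  have d4 := d3.log hpos.ne'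
  unfold _root_.arcosh
  convert d4 using 1
  field_simp
  ring

lemma hasDerivAt_sin_half (θ : ℝ) :
    HasDerivAt (fun t : ℝ => Real.sin (t / 2)) (Real.cos (θ / 2) * (1 / 2)) θ := by
  have h1 : HasDerivAt (fun t : ℝ => t / 2) (1 / 2) θ := by
    simpa using (hasDerivAt_id θ).div_const 2
  exact (Real.hasDerivAt_sin (θ / 2)).comp θ h1

lemma hasDerivAt_cos_half (θ : ℝ) :
    HasDerivAt (fun t : ℝ => Real.cos (t / 2)) (-Real.sin (θ / 2) * (1 / 2)) θ := by
  have h1 : HasDerivAt (fun t : ℝ => t / 2) (1 / 2) θ := by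
    simpa using (hasDerivAt_id θ).div_const 2
  exact (Real.hasDerivAt_cos (θ / 2)).comp θ h1

lemma hasDerivAt_Pfun {c θ : ℝ} (hs : 0 < Real.sin (θ / 2)) (hsc : Real.sin (θ / 2) < c) :
    HasDerivAt (Pfun c) (Pder c θ) θ := by
  set s := Real.sin (θ / 2) with hs_def
  have hc : 0 < c := lt_trans hs hsc
  have hx : 1 < c / s := (one_lt_div hs).2 hsc
  have h1 : (0:ℝ) < c ^ 2 - s ^ 2 := by nlinarith
  have hr : 0 < Real.sqrt (c ^ 2 - s ^ 2) := Real.sqrt_pos.2 h1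
  have hr2 : Real.sqrt (c ^ 2 - s ^ 2) ^ 2 = c ^ 2 - s ^ 2 := Real.sq_sqrt h1.le
  have d2 : HasDerivAt (fun t : ℝ => c / Real.sin (t / 2))
      ((0 * s - c * (Real.cos (θ / 2) * (1 / 2))) / s ^ 2) θ :=
    (hasDerivAt_const θ c).div (hasDerivAt_sin_half θ) hs.ne'
  have d3 := (_root_.hasDerivAt_arcosh hx).comp θ d2
  have key : Real.sqrt ((c / s) ^ 2 - 1) = Real.sqrt (c ^ 2 - s ^ 2) / s := by
    rw [show (c / s) ^ 2 - 1 = (c ^ 2 - s ^ 2) / s ^ 2 by field_simp]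
    rw [Real.sqrt_div h1.le, Real.sqrt_sq hs.le]
  refine d3.congr_deriv ?_
  symm
  rw [key]
  unfold Pder
  rw [← hs_def]
  field_simp
  ring

lemma hasDerivAt_Pder {c θ : ℝ} (hs : 0 < Real.sin (θ / 2)) (hsc : Real.sin (θ / 2) < c) :
    HasDerivAt (Pder c) (Pder2 c θ) θ := by
  set s := Real.sin (θ / 2) with hs_def
  set co := Real.cos (θ / 2) with hco_def
  have hc : 0 < c := lt_trans hs hsc
  have h1 : (0:ℝ) < c ^ 2 - s ^ 2 := by nlinarith
  set r := Real.sqrt (c ^ 2 - s ^ 2) with hr_def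
  have hr : 0 < r := Real.sqrt_pos.2 h1
  have hr2 : r ^ 2 = c ^ 2 - s ^ 2 := Real.sq_sqrt h1.le
  have hcos2 : co ^ 2 = 1 - s ^ 2 := by rw [hco_def, hs_def]; exact Real.cos_sq' _
  have dnum : HasDerivAt (fun t : ℝ => -(c * Real.cos (t / 2)))
      (-(c * (-s * (1 / 2)))) θ := ((hasDerivAt_cos_half θ).const_mul c).neg
  have dinner : HasDerivAt (fun t : ℝ => c ^ 2 - Real.sin (t / 2) ^ 2)
      (-(2 * s ^ 1 * (co * (1 / 2)))) θ := by
    exact (((hasDerivAt_sin_half θ).pow 2)).const_sub (c ^ 2)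
  have dsqrt : HasDerivAt (fun t : ℝ => Real.sqrt (c ^ 2 - Real.sin (t / 2) ^ 2))
      (-(2 * s ^ 1 * (co * (1 / 2))) / (2 * r)) θ := dinner.sqrt h1.ne'
  have dden : HasDerivAt
      (fun t : ℝ => 2 * Real.sin (t / 2) * Real.sqrt (c ^ 2 - Real.sin (t / 2) ^ 2))
      (2 * (co * (1 / 2)) * r + 2 * s * (-(2 * s ^ 1 * (co * (1 / 2))) / (2 * r))) θ := by
    exact ((hasDerivAt_sin_half θ).const_mul 2).mul dsqrt
  have hden : 2 * s * r ≠ 0 := by positivity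
  have dq := dnum.div dden hden
  refine dq.congr_deriv ?_
  symm
  unfold Pder2
  rw [← hs_def, ← hr_def]
  rw [← hco_def]
  field_simp
  linear_combination (- 4*s^2 + 4*s^4) * hr2 +
    (4*c^2*s^2 - 4*c^2*r^2 + 4*s^2*r^2 - 4*s^4) * hcos2

lemma strictConvexOn_Pfun {c m : ℝ} (hm0 : 0 < m) (hm1 : m < 1) (hc : 0 < c)
    (hrel : c ^ 2 = 1 - m ^ 2) :
    StrictConvexOn ℝ (Set.Ioo 0 (2 * Real.arcsin (Real.sqrt (1 - m)))) (Pfun c) := by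
  set b := 2 * Real.arcsin (Real.sqrt (1 - m)) with hb_def
  have h1m : (0:ℝ) < 1 - m := by linarith
  have key : ∀ x ∈ Set.Ioo (0:ℝ) b,
      0 < Real.sin (x / 2) ∧ Real.sin (x / 2) ^ 2 < 1 - m := by
    intro x hx
    have hsq1 : Real.sqrt (1 - m) ≤ 1 :=
      Real.sqrt_le_one.2 (by linarith)
    have harc_le : Real.arcsin (Real.sqrt (1 - m)) ≤ π / 2 :=
      Real.arcsin_le_pi_div_two _
    have hu0 : 0 < x / 2 := by linarith [hx.1]
    have hub : x / 2 < Real.arcsin (Real.sqrt (1 - m)) := by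
      have := hx.2; rw [hb_def] at this; linarith
    have hupi : x / 2 < π / 2 := lt_of_lt_of_le hub harc_le
    have hsinpos : 0 < Real.sin (x / 2) :=
      Real.sin_pos_of_pos_of_lt_pi hu0 (by linarith [Real.pi_pos])
    have hslt : Real.sin (x / 2) < Real.sqrt (1 - m) := by
      have h1 := Real.arcsin_mem_Icc (Real.sqrt (1 - m))
      calc Real.sin (x / 2) < Real.sin (Real.arcsin (Real.sqrt (1 - m))) := by
            apply Real.strictMonoOn_sin ⟨by linarith, hupi.le⟩ ⟨h1.1, h1.2⟩ hub
        _ = Real.sqrt (1 - m) := Real.sin_arcsin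
              (by linarith [Real.sqrt_nonneg (1 - m)]) hsq1
    constructor
    · exact hsinpos
    · calc Real.sin (x / 2) ^ 2 < Real.sqrt (1 - m) ^ 2 := by
            exact pow_lt_pow_left₀ hslt hsinpos.le (by norm_num)
        _ = 1 - m := Real.sq_sqrt h1m.le
  have keyc : ∀ x ∈ Set.Ioo (0:ℝ) b, Real.sin (x / 2) < c := by
    intro x hx
    obtain ⟨h1, h2⟩ := key x hx
    nlinarith
  apply strictConvexOn_of_deriv2_pos (convex_Ioo 0 b)
  · intro x hx
    exact (hasDerivAt_Pfun (key x hx).1 (keyc x hx)).continuousAt.continuousWithinAt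
  · intro x hx
    rw [interior_Ioo] at hx
    have h2 : deriv^[2] (Pfun c) x = deriv (deriv (Pfun c)) x := by
      simp [Function.iterate_succ, Function.comp]
    rw [h2]
    have hev : deriv (Pfun c) =ᶠ[nhds x] Pder c := by
      filter_upwards [Ioo_mem_nhds hx.1 hx.2] with y hy
      exact (hasDerivAt_Pfun (key y hy).1 (keyc y hy)).deriv
    rw [hev.deriv_eq, (hasDerivAt_Pder (key x hx).1 (keyc x hx)).deriv]
    obtain ⟨hs, hs2⟩ := key x hx
    have hsc := keyc x hx
    have hcs : 0 < c ^ 2 - Real.sin (x / 2) ^ 2 := by nlinarith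
    have hnum : 0 < c ^ 2 - 2 * Real.sin (x / 2) ^ 2 + Real.sin (x / 2) ^ 4 := by
      nlinarith
    unfold Pder2
    have hrpos : 0 < Real.sqrt (c ^ 2 - Real.sin (x / 2) ^ 2) := Real.sqrt_pos.2 hcs
    apply div_pos (by positivity)
    positivity

theorem stmt18 (n k : ℕ) (hn : 3 ≤ n) (hk : 1 ≤ k) (T : ℝ) (hT : 0 < T)
    (θ : Fin k → ℝ)
    (hθ : ∀ i, θ i ∈ Set.Ioo 0 (2 * Real.arcsin (Real.sqrt (1 - Real.sin (π / n)))))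
    (hsum : ∑ i, θ i = ((n - 2 : ℝ) * k * π - T) / n)
    (havg : ((n - 2 : ℝ) * π - T / k) / n
      ∈ Set.Ioo 0 (2 * Real.arcsin (Real.sqrt (1 - Real.sin (π / n))))) :
    ∑ i, 2 * n * _root_.arcosh (Real.cos (π / n) / Real.sin (θ i / 2))
      ≥ 2 * n * k * _root_.arcosh (Real.cos (π / n) / Real.sin (((n - 2 : ℝ) * π - T / k) / (2 * n))) ∧
    (∑ i, 2 * n * _root_.arcosh (Real.cos (π / n) / Real.sin (θ i / 2))
      = 2 * n * k * _root_.arcosh (Real.cos (π / n) / Real.sin (((n - 2 : ℝ) * π - T / k) / (2 * n)))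
      ↔ ∀ i, θ i = ((n - 2 : ℝ) * π - T / k) / n) := by
  have hn3 : (3:ℝ) ≤ (n:ℝ) := by exact_mod_cast hn
  have hn0 : (0:ℝ) < (n:ℝ) := by linarith
  have hk0 : (0:ℝ) < (k:ℝ) := by exact_mod_cast hk
  have hπ := Real.pi_pos
  have hπn0 : 0 < π / n := div_pos hπ hn0
  have hπn3 : π / n ≤ π / 3 := div_le_div_of_nonneg_left hπ.le (by norm_num) hn3
  have hπn2 : π / n < π / 2 := by
    apply lt_of_le_of_lt hπn3
    linarith
  have hc : 0 < Real.cos (π / n) := Real.cos_pos_of_mem_Ioo ⟨by linarith, hπn2⟩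
  have hm0 : 0 < Real.sin (π / n) := Real.sin_pos_of_pos_of_lt_pi hπn0 (by linarith)
  have hrel : Real.cos (π / n) ^ 2 = 1 - Real.sin (π / n) ^ 2 := Real.cos_sq' _
  have hm1 : Real.sin (π / n) < 1 := by nlinarith
  set c := Real.cos (π / n) with hc_def
  set A := ((n - 2 : ℝ) * π - T / k) / n with hA_def
  have hconv := strictConvexOn_Pfun hm0 hm1 hc hrel
  have h₀ : ∀ i ∈ (Finset.univ : Finset (Fin k)), (0:ℝ) < (k:ℝ)⁻¹ := fun i _ => by positivity
  have hw1 : ∑ _i : Fin k, (k:ℝ)⁻¹ = 1 := by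
    simp [Finset.sum_const, Finset.card_univ]
    field_simp
  have hmem : ∀ i ∈ (Finset.univ : Finset (Fin k)), θ i
      ∈ Set.Ioo (0:ℝ) (2 * Real.arcsin (Real.sqrt (1 - Real.sin (π / n)))) :=
    fun i _ => hθ i
  have hAsum : ∑ i, (k:ℝ)⁻¹ • θ i = A := by
    simp only [smul_eq_mul]
    rw [← Finset.mul_sum, hsum, hA_def]
    field_simp
  have hiff := hconv.map_sum_eq_iff h₀ hw1 hmem
  rw [hAsum] at hiff
  have hle := hconv.convexOn.map_sum_le (fun i hi => (h₀ i hi).le) hw1 hmem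
  rw [hAsum] at hle
  have hPA : _root_.arcosh (c / Real.sin (((n - 2 : ℝ) * π - T / k) / (2 * n))) = Pfun c A := by
    unfold Pfun
    congr 2
    rw [hA_def, div_div]
    ring_nf
  have hsum_smul : ∑ i, (k:ℝ)⁻¹ • Pfun c (θ i) = (k:ℝ)⁻¹ * ∑ i, Pfun c (θ i) := by
    simp only [smul_eq_mul]
    rw [← Finset.mul_sum]
  rw [hsum_smul] at hle hiff
  have hS_eq : ∑ i, 2 * (n:ℝ) * _root_.arcosh (c / Real.sin (θ i / 2))
      = 2 * n * ∑ i, Pfun c (θ i) := by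
    rw [Finset.mul_sum]
    rfl
  set S := ∑ i, Pfun c (θ i) with hS_def
  constructor
  · rw [ge_iff_le, hS_eq, hPA]
    have h1 := mul_le_mul_of_nonneg_left hle (show (0:ℝ) ≤ 2 * n * k by positivity)
    calc 2 * (n:ℝ) * k * Pfun c A ≤ 2 * n * k * ((k:ℝ)⁻¹ * S) := h1
      _ = 2 * n * S := by field_simp
  · rw [hS_eq, hPA]
    constructor
    · intro h i
      have hkS : Pfun c A = (k:ℝ)⁻¹ * S := by
        have h2 : S = k * Pfun c A := by
          apply mul_left_cancel₀ (show (2:ℝ) * n ≠ 0 by positivity)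
          linear_combination h
        rw [h2]
        field_simp
      have := (hiff.1 hkS) i (Finset.mem_univ i)
      exact this
    · intro h
      have h2 : S = k * Pfun c A := by
        rw [hS_def]
        calc ∑ i, Pfun c (θ i) = ∑ _i : Fin k, Pfun c A := by
              apply Finset.sum_congr rfl
              intro i _
              rw [h i]
          _ = k * Pfun c A := by
              simp [Finset.sum_const, Finset.card_univ, nsmul_eq_mul]
      rw [h2]
      ring
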